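/- arXiv:1810.02658 — 2 statements merged into one kernel-verified Lean document; each statement's English description precedes it below -/
import Mathlib

section
/- Let Σ be a real symmetric A×A matrix with eigenvalues μ₁, …, μ_A and orthonormal eigenvectors ψ₁, …, ψ_A, and suppose at least one μᵢ is negative. Define ηᵢ = (−μᵢ)⁺ / √(Σⱼ ((−μⱼ)⁺)²) and W = Σᵢ ηᵢ ψᵢ ψᵢᵀ. Then W is symmetric positive semidefinite, ‖W‖_F = 1, and W minimizes the function M ↦ trace(M Σ) over all symmetric positive semidefinite matrices M with ‖M‖_F = 1, with minimum value −√(Σᵢ ((−μᵢ)⁺)²). -/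
open Matrix Finset

private lemma sum3_comm {A : ℕ} (f : Fin A → Fin A → Fin A → ℝ) :
    ∑ i, ∑ j, ∑ k, f i j k = ∑ k, ∑ i, ∑ j, f i j k := by
  calc ∑ i, ∑ j, ∑ k, f i j k
      = ∑ i, ∑ k, ∑ j, f i j k :=
        Finset.sum_congr rfl fun i _ => Finset.sum_comm
    _ = ∑ k, ∑ i, ∑ j, f i j k := Finset.sum_comm

private lemma sum4_comm {A : ℕ} (f : Fin A → Fin A → Fin A → Fin A → ℝ) :
    ∑ i, ∑ j, ∑ k, ∑ l, f i j k l = ∑ k, ∑ l, ∑ i, ∑ j, f i j k l := by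
  calc ∑ i, ∑ j, ∑ k, ∑ l, f i j k l
      = ∑ i, ∑ k, ∑ l, ∑ j, f i j k l := by
        refine Finset.sum_congr rfl fun i _ => ?_
        rw [Finset.sum_comm]
        exact Finset.sum_congr rfl fun k _ => Finset.sum_comm
    _ = ∑ k, ∑ l, ∑ i, ∑ j, f i j k l := by
        rw [Finset.sum_comm]
        exact Finset.sum_congr rfl fun k _ => Finset.sum_comm

private lemma factor_sum {A : ℕ} (K : ℝ) (a b : Fin A → ℝ) :
    ∑ i, ∑ j, K * (a i * b j) = K * ((∑ i, a i) * (∑ j, b j)) := by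
  rw [Finset.sum_mul_sum, Finset.mul_sum]
  exact Finset.sum_congr rfl fun i _ => (Finset.mul_sum _ _ _).symm

private lemma quad_sum {A : ℕ} {ψ : Fin A → Fin A → ℝ}
    (horth : ∀ i j, (ψ i) ⬝ᵥ (ψ j) = if i = j then 1 else 0)
    (c d : Fin A → ℝ) :
    ∑ i, ∑ j, (∑ k, c k * (ψ k i * ψ k j)) * (∑ l, d l * (ψ l i * ψ l j))
      = ∑ k, c k * d k := by
  have horth' : ∀ k l, ∑ i, ψ k i * ψ l i = if k = l then (1:ℝ) else 0 := fun k l => horth k l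
  calc ∑ i, ∑ j, (∑ k, c k * (ψ k i * ψ k j)) * (∑ l, d l * (ψ l i * ψ l j))
      = ∑ i, ∑ j, ∑ k, ∑ l, (c k * d l) * ((ψ k i * ψ l i) * (ψ k j * ψ l j)) := by
        refine Finset.sum_congr rfl fun i _ => Finset.sum_congr rfl fun j _ => ?_
        rw [Finset.sum_mul_sum]
        exact Finset.sum_congr rfl fun k _ => Finset.sum_congr rfl fun l _ => by ring
    _ = ∑ k, ∑ l, ∑ i, ∑ j, (c k * d l) * ((ψ k i * ψ l i) * (ψ k j * ψ l j)) := sum4_comm _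
    _ = ∑ k, ∑ l, (c k * d l) * ((∑ i, ψ k i * ψ l i) * (∑ j, ψ k j * ψ l j)) := by
        refine Finset.sum_congr rfl fun k _ => Finset.sum_congr rfl fun l _ => ?_
        · exact factor_sum _ _ _
    _ = ∑ k, ∑ l, (c k * d l) * ((if k = l then (1:ℝ) else 0) * (if k = l then (1:ℝ) else 0)) := by
        refine Finset.sum_congr rfl fun k _ => Finset.sum_congr rfl fun l _ => ?_
        rw [horth']
    _ = ∑ k, c k * d k := by
        refine Finset.sum_congr rfl fun k _ => ?_
        simp [Finset.sum_ite_eq]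

/-- Theorem 1 of IMMIGRATE: given a symmetric `Σ` with orthonormal eigenvectors
`ψ i` and eigenvalues `μ i`, at least one negative, the matrix
`W = ∑ i, ηᵢ ψᵢψᵢᵀ` with `ηᵢ = (-μᵢ)⁺ / √(∑ⱼ ((-μⱼ)⁺)²)` is symmetric PSD with
unit Frobenius norm and minimizes `M ↦ trace (M Σ)` over symmetric PSD matrices
of unit Frobenius norm, with minimum value `-√(∑ i ((-μᵢ)⁺)²)`. -/
theorem immigrate_theorem_one (A : ℕ)
    (S : Matrix (Fin A) (Fin A) ℝ) (ψ : Fin A → Fin A → ℝ) (μ : Fin A → ℝ)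
    (horth : ∀ i j, (ψ i) ⬝ᵥ (ψ j) = if i = j then 1 else 0)
    (hS : S = ∑ i, μ i • vecMulVec (ψ i) (ψ i))
    (hneg : ∃ i, μ i < 0)
    (η : Fin A → ℝ)
    (hη : η = fun i => max (-μ i) 0 / Real.sqrt (∑ j, (max (-μ j) 0) ^ 2))
    (W : Matrix (Fin A) (Fin A) ℝ)
    (hW : W = ∑ i, η i • vecMulVec (ψ i) (ψ i)) :
    W.PosSemidef ∧
    Real.sqrt (∑ i, ∑ j, W i j ^ 2) = 1 ∧
    (W * S).trace = -Real.sqrt (∑ i, (max (-μ i) 0) ^ 2) ∧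
    ∀ M : Matrix (Fin A) (Fin A) ℝ, M.PosSemidef →
      Real.sqrt (∑ i, ∑ j, M i j ^ 2) = 1 →
      (W * S).trace ≤ (M * S).trace := by
  set s := Real.sqrt (∑ j, (max (-μ j) 0) ^ 2) with hs_def
  have hsum_pos : 0 < ∑ j, (max (-μ j) 0) ^ 2 := by
    obtain ⟨i, hi⟩ := hneg
    refine Finset.sum_pos' (fun j _ => sq_nonneg _) ⟨i, Finset.mem_univ i, ?_⟩
    have : max (-μ i) 0 = -μ i := max_eq_left (by linarith)
    rw [this]
    exact pow_pos (by linarith) 2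
  have hs : 0 < s := Real.sqrt_pos.2 hsum_pos
  have hs2 : s ^ 2 = ∑ j, (max (-μ j) 0) ^ 2 := Real.sq_sqrt hsum_pos.le
  have hη' : ∀ k, 0 ≤ η k := by
    intro k; rw [hη]; exact div_nonneg (le_max_right _ _) hs.le
  have hWe : ∀ i j, W i j = ∑ k, η k * (ψ k i * ψ k j) := by
    intro i j
    rw [hW]
    simp [Matrix.sum_apply, Matrix.smul_apply, vecMulVec_apply, smul_eq_mul]
  have hSe : ∀ i j, S i j = ∑ k, μ k * (ψ k i * ψ k j) := by
    intro i j
    rw [hS]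
    simp [Matrix.sum_apply, Matrix.smul_apply, vecMulVec_apply, smul_eq_mul]
  -- trace formula
  have htr : ∀ M : Matrix (Fin A) (Fin A) ℝ,
      (M * S).trace = ∑ k, μ k * (∑ i, ∑ j, M i j * (ψ k i * ψ k j)) := by
    intro M
    calc (M * S).trace = ∑ i, ∑ j, M i j * S j i := by
          simp [Matrix.trace, Matrix.diag, Matrix.mul_apply]
      _ = ∑ i, ∑ j, ∑ k, μ k * (M i j * (ψ k i * ψ k j)) := by
          refine Finset.sum_congr rfl fun i _ => Finset.sum_congr rfl fun j _ => ?_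
          rw [hSe, Finset.mul_sum]
          exact Finset.sum_congr rfl fun k _ => by ring
      _ = ∑ k, ∑ i, ∑ j, μ k * (M i j * (ψ k i * ψ k j)) := sum3_comm _
      _ = ∑ k, μ k * (∑ i, ∑ j, M i j * (ψ k i * ψ k j)) := by
          refine Finset.sum_congr rfl fun k _ => ?_
          rw [Finset.mul_sum]
          exact Finset.sum_congr rfl fun i _ => (Finset.mul_sum _ _ _).symm
  -- ∑ᵢⱼ M i j * (ψ k i * ψ k j) for M = W equals η k
  have hWa : ∀ k, (∑ i, ∑ j, W i j * (ψ k i * ψ k j)) = η k := by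
    intro k
    have h1 : ∑ i, ∑ j, (∑ t, η t * (ψ t i * ψ t j)) *
        (∑ l, (fun l => if l = k then (1:ℝ) else 0) l * (ψ l i * ψ l j))
        = ∑ t, η t * (if t = k then (1:ℝ) else 0) := quad_sum horth η _
    simp only [ite_mul, one_mul, zero_mul, Finset.sum_ite_eq', Finset.mem_univ, if_true,
      mul_ite, mul_one, mul_zero] at h1
    calc ∑ i, ∑ j, W i j * (ψ k i * ψ k j)
        = ∑ i, ∑ j, (∑ t, η t * (ψ t i * ψ t j)) * (ψ k i * ψ k j) := by
          refine Finset.sum_congr rfl fun i _ => Finset.sum_congr rfl fun j _ => ?_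
          rw [hWe]
      _ = η k := h1
  -- trace (W * S)
  have hηk : ∀ k, η k = max (-μ k) 0 / s := by intro k; rw [hη]
  have htrWS : (W * S).trace = -s := by
    rw [htr]
    have hterm : ∀ k, μ k * (∑ i, ∑ j, W i j * (ψ k i * ψ k j))
        = -((max (-μ k) 0) ^ 2) / s := by
      intro k
      rw [hWa, hηk]
      rcases le_or_gt (μ k) 0 with h | h
      · have hm : max (-μ k) 0 = -μ k := max_eq_left (by linarith)
        rw [hm]; ring
      · have hm : max (-μ k) 0 = 0 := max_eq_right (by linarith)
        rw [hm]; norm_num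
    rw [Finset.sum_congr rfl fun k _ => hterm k, ← Finset.sum_div,
      Finset.sum_neg_distrib, ← hs2]
    rw [neg_div, sq, mul_div_assoc, div_self hs.ne', mul_one]
  refine ⟨?_, ?_, ?_, ?_⟩
  · -- PSD
    rw [posSemidef_iff_dotProduct_mulVec]
    constructor
    · ext i j
      simp only [conjTranspose_apply, star_trivial]
      rw [hWe, hWe]
      exact Finset.sum_congr rfl fun k _ => by ring
    · intro x
      have hq : dotProduct (star x) (W *ᵥ x) = ∑ k, η k * (∑ i, ψ k i * x i) ^ 2 := by
        calc dotProduct (star x) (W *ᵥ x)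
            = ∑ i, ∑ j, x i * (W i j * x j) := by
              simp [dotProduct, mulVec, Finset.mul_sum]
          _ = ∑ i, ∑ j, ∑ k, η k * ((ψ k i * x i) * (ψ k j * x j)) := by
              refine Finset.sum_congr rfl fun i _ => Finset.sum_congr rfl fun j _ => ?_
              rw [hWe, Finset.sum_mul, Finset.mul_sum]
              exact Finset.sum_congr rfl fun k _ => by ring
          _ = ∑ k, ∑ i, ∑ j, η k * ((ψ k i * x i) * (ψ k j * x j)) := sum3_comm _
          _ = ∑ k, η k * ((∑ i, ψ k i * x i) * (∑ j, ψ k j * x j)) := by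
              exact Finset.sum_congr rfl fun k _ => factor_sum _ _ _
          _ = ∑ k, η k * (∑ i, ψ k i * x i) ^ 2 := by
              exact Finset.sum_congr rfl fun k _ => by ring
      rw [hq]
      exact Finset.sum_nonneg fun k _ => mul_nonneg (hη' k) (sq_nonneg _)
  · -- Frobenius norm 1
    have h1 : ∑ i, ∑ j, W i j ^ 2 = ∑ k, η k * η k := by
      rw [← quad_sum horth η η]
      refine Finset.sum_congr rfl fun i _ => Finset.sum_congr rfl fun j _ => ?_
      rw [hWe]; ring
    have h2 : ∑ k, η k * η k = 1 := by
      rw [hη]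
      simp only [div_mul_div_comm]
      rw [← Finset.sum_div]
      rw [show Real.sqrt (∑ j, (max (-μ j) 0) ^ 2) * Real.sqrt (∑ j, (max (-μ j) 0) ^ 2)
        = s ^ 2 by rw [sq]]
      rw [hs2]
      field_simp
    rw [h1, h2, Real.sqrt_one]
  · rw [htrWS]
  · -- minimality
    intro M hM hMn
    obtain ⟨a, ha_def⟩ : ∃ a : Fin A → ℝ,
        ∀ k, a k = ∑ i, ∑ j, M i j * (ψ k i * ψ k j) :=
      ⟨fun k => ∑ i, ∑ j, M i j * (ψ k i * ψ k j), fun k => rfl⟩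
    have ha_nonneg : ∀ k, 0 ≤ a k := by
      intro k
      have h := hM.dotProduct_mulVec_nonneg (ψ k)
      have he : dotProduct (star (ψ k)) (M *ᵥ ψ k) = a k := by
        rw [ha_def]
        simp only [star_trivial, dotProduct, mulVec, Finset.mul_sum]
        exact Finset.sum_congr rfl fun i _ => Finset.sum_congr rfl fun j _ => by ring
      rw [he] at h; exact h
    have hMnorm : ∑ i, ∑ j, M i j ^ 2 = 1 := by
      have h0 : 0 ≤ ∑ i, ∑ j, M i j ^ 2 :=
        Finset.sum_nonneg fun i _ => Finset.sum_nonneg fun j _ => sq_nonneg _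
      have := Real.sq_sqrt h0
      rw [hMn] at this; linarith [this]
    -- Bessel
    have hbess : ∑ k, a k ^ 2 ≤ 1 := by
      have hMT : ∑ i, ∑ j, M i j * (∑ k, a k * (ψ k i * ψ k j)) = ∑ k, a k * a k := by
        calc ∑ i, ∑ j, M i j * (∑ k, a k * (ψ k i * ψ k j))
            = ∑ i, ∑ j, ∑ k, a k * (M i j * (ψ k i * ψ k j)) := by
              refine Finset.sum_congr rfl fun i _ => Finset.sum_congr rfl fun j _ => ?_
              rw [Finset.mul_sum]
              exact Finset.sum_congr rfl fun k _ => by ring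
          _ = ∑ k, ∑ i, ∑ j, a k * (M i j * (ψ k i * ψ k j)) := sum3_comm _
          _ = ∑ k, a k * a k := by
              refine Finset.sum_congr rfl fun k _ => ?_
              conv_rhs => rw [ha_def k]
              rw [Finset.mul_sum]
              refine Finset.sum_congr rfl fun i _ => ?_
              rw [Finset.mul_sum]
              exact Finset.sum_congr rfl fun j _ => by rw [ha_def k]
      have hTT : ∑ i, ∑ j, (∑ k, a k * (ψ k i * ψ k j)) ^ 2 = ∑ k, a k * a k := by
        rw [← quad_sum horth a a]
        exact Finset.sum_congr rfl fun i _ => Finset.sum_congr rfl fun j _ => by rw [sq]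
      have h0 : 0 ≤ ∑ i, ∑ j, (M i j - ∑ k, a k * (ψ k i * ψ k j)) ^ 2 :=
        Finset.sum_nonneg fun i _ => Finset.sum_nonneg fun j _ => sq_nonneg _
      have hex : ∑ i, ∑ j, (M i j - ∑ k, a k * (ψ k i * ψ k j)) ^ 2
          = (∑ i, ∑ j, M i j ^ 2) - 2 * (∑ i, ∑ j, M i j * (∑ k, a k * (ψ k i * ψ k j)))
            + ∑ i, ∑ j, (∑ k, a k * (ψ k i * ψ k j)) ^ 2 := by
        calc ∑ i, ∑ j, (M i j - ∑ k, a k * (ψ k i * ψ k j)) ^ 2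
            = ∑ i, ∑ j, (M i j ^ 2 - 2 * (M i j * (∑ k, a k * (ψ k i * ψ k j)))
                + (∑ k, a k * (ψ k i * ψ k j)) ^ 2) := by
              refine Finset.sum_congr rfl fun i _ => Finset.sum_congr rfl fun j _ => ?_
              ring
          _ = _ := by
              simp only [Finset.sum_add_distrib, Finset.sum_sub_distrib, Finset.mul_sum]
      rw [hMT, hTT, hMnorm] at hex
      have hsq : ∀ k, a k * a k = a k ^ 2 := fun k => (sq (a k)).symm
      rw [Finset.sum_congr rfl fun k _ => hsq k] at hex
      linarith [hex ▸ h0]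
    -- Cauchy–Schwarz
    have hcs : ∑ k, max (-μ k) 0 * a k ≤ s := by
      have h1 : (∑ k, max (-μ k) 0 * a k) ^ 2
          ≤ (∑ k, (max (-μ k) 0) ^ 2) * ∑ k, a k ^ 2 :=
        Finset.sum_mul_sq_le_sq_mul_sq _ _ _
      have h2 : (∑ k, (max (-μ k) 0) ^ 2) * ∑ k, a k ^ 2 ≤ s ^ 2 := by
        rw [hs2]
        nlinarith [hsum_pos, hbess]
      have h3 : 0 ≤ ∑ k, max (-μ k) 0 * a k :=
        Finset.sum_nonneg fun k _ => mul_nonneg (le_max_right _ _) (ha_nonneg k)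
      nlinarith [h1, h2, h3, hs.le]
    rw [htrWS, htr M]
    have hlb : -s ≤ ∑ k, μ k * a k := by
      have hstep : ∀ k, -(max (-μ k) 0 * a k) ≤ μ k * a k := by
        intro k
        have h1 : -(max (-μ k) 0) ≤ μ k := by
          rcases le_or_gt (μ k) 0 with h | h
          · rw [max_eq_left (by linarith : (0:ℝ) ≤ -μ k)]; linarith
          · rw [max_eq_right (by linarith : -μ k ≤ (0:ℝ))]; linarith
        calc -(max (-μ k) 0 * a k) = (-(max (-μ k) 0)) * a k := by ring
          _ ≤ μ k * a k := mul_le_mul_of_nonneg_right h1 (ha_nonneg k)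
      calc -s ≤ -(∑ k, max (-μ k) 0 * a k) := neg_le_neg hcs
        _ = ∑ k, -(max (-μ k) 0 * a k) := by rw [Finset.sum_neg_distrib]
        _ ≤ ∑ k, μ k * a k := Finset.sum_le_sum fun k _ => hstep k
    calc -s ≤ ∑ k, μ k * a k := hlb
      _ = ∑ k, μ k * ∑ i, ∑ j, M i j * (ψ k i * ψ k j) :=
        Finset.sum_congr rfl fun k _ => by rw [ha_def k]
end

section
/- For any symmetric matrix Σ with eigenvalues μ₁ ≥ ⋯ ≥ μ_A and any symmetric positive semidefinite matrix M with ‖M‖_F = 1, trace(M Σ) ≥ −‖(−μ)⁺‖₂, i.e., trace(M Σ) ≥ −√(Σᵢ (max(−μᵢ, 0))²). -/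
open Matrix

lemma double_sum_swap_ring {A : ℕ} (f : Fin A → Fin A → ℝ) :
    (∑ x, ∑ y, f x y) = ∑ y, ∑ x, f x y := Finset.sum_comm

/-- Lower-bound half of IMMIGRATE's Theorem 1: for a symmetric matrix `Σ` with
orthonormal eigenvectors `ψ i` and eigenvalues `μ i`, and any symmetric PSD
matrix `M` with unit Frobenius norm,
`trace (M Σ) ≥ -√(∑ i, (max (-μ i) 0)²)`. -/
theorem trace_lower_bound (A : ℕ)
    (S : Matrix (Fin A) (Fin A) ℝ) (ψ : Fin A → Fin A → ℝ) (μ : Fin A → ℝ)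
    (horth : ∀ i j, (ψ i) ⬝ᵥ (ψ j) = if i = j then 1 else 0)
    (hS : S = ∑ i, μ i • vecMulVec (ψ i) (ψ i))
    (M : Matrix (Fin A) (Fin A) ℝ) (hM : M.PosSemidef)
    (hMF : Real.sqrt (∑ i, ∑ j, M i j ^ 2) = 1) :
    -Real.sqrt (∑ i, (max (-μ i) 0) ^ 2) ≤ (M * S).trace := by
  classical
  set P : Matrix (Fin A) (Fin A) ℝ := Matrix.of ψ with hP
  have hPPT : P * Pᵀ = 1 := by
    ext i j
    have := horth i j
    simpa [Matrix.mul_apply, dotProduct, Matrix.one_apply, hP] using this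
  have hPTP : Pᵀ * P = 1 := mul_eq_one_comm.mp hPPT
  set B : Matrix (Fin A) (Fin A) ℝ := P * M * Pᵀ with hB
  set c : Fin A → ℝ := fun i => B i i with hc
  -- c i = ψ i ⬝ᵥ M *ᵥ ψ i
  have hceq : ∀ i, c i = ψ i ⬝ᵥ (M *ᵥ ψ i) := by
    intro i
    simp only [hc, hB, Matrix.mul_apply, dotProduct, Matrix.mulVec, dotProduct,
      Matrix.transpose_apply, hP, Matrix.of_apply]
    simp only [Finset.sum_mul, Finset.mul_sum]
    rw [double_sum_swap_ring]
    exact Finset.sum_congr rfl fun x _ => Finset.sum_congr rfl fun y _ => by ring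
  have hcnonneg : ∀ i, 0 ≤ c i := by
    intro i
    rw [hceq i]
    have := hM.dotProduct_mulVec_nonneg (ψ i)
    simpa using this
  -- trace (M * S) = ∑ i, μ i * c i
  have htr : (M * S).trace = ∑ i, μ i * c i := by
    rw [hS, Finset.mul_sum, Matrix.trace_sum]
    refine Finset.sum_congr rfl fun i _ => ?_
    rw [Matrix.mul_smul, Matrix.trace_smul, hceq i]
    simp only [smul_eq_mul]
    congr 1
    simp only [Matrix.trace, Matrix.diag, Matrix.mul_apply, Matrix.vecMulVec_apply,
      dotProduct, Matrix.mulVec, dotProduct]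
    simp only [Finset.sum_mul, Finset.mul_sum]
    exact Finset.sum_congr rfl fun x _ => Finset.sum_congr rfl fun y _ => by ring
  -- Frobenius norm invariance
  have hx : ∀ X : Matrix (Fin A) (Fin A) ℝ, Pᵀ * (P * X) = X := by
    intro X; rw [← Matrix.mul_assoc, hPTP, Matrix.one_mul]
  have hkey : B * Bᵀ = P * (M * Mᵀ) * Pᵀ := by
    simp only [hB, Matrix.transpose_mul, Matrix.transpose_transpose, Matrix.mul_assoc]
    rw [hx]
  have hfrob : (∑ i, ∑ j, B i j ^ 2) = ∑ i, ∑ j, M i j ^ 2 := by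
    have h1 : (∑ i, ∑ j, B i j ^ 2) = (B * Bᵀ).trace := by
      simp [Matrix.trace, Matrix.diag, Matrix.mul_apply, sq]
    have h2 : (∑ i, ∑ j, M i j ^ 2) = (M * Mᵀ).trace := by
      simp [Matrix.trace, Matrix.diag, Matrix.mul_apply, sq]
    rw [h1, h2, hkey, Matrix.trace_mul_cycle, ← Matrix.mul_assoc, hPTP, Matrix.one_mul]
  have hM1 : (∑ i, ∑ j, M i j ^ 2) = 1 := by
    have hnn : 0 ≤ ∑ i, ∑ j, M i j ^ 2 :=
      Finset.sum_nonneg fun i _ => Finset.sum_nonneg fun j _ => sq_nonneg _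
    have := Real.sq_sqrt hnn
    rw [hMF] at this
    simpa using this.symm
  -- ∑ c² ≤ 1
  have hcsq : (∑ i, c i ^ 2) ≤ 1 := by
    rw [← hM1, ← hfrob]
    refine Finset.sum_le_sum fun i _ => ?_
    exact Finset.single_le_sum (f := fun j => B i j ^ 2)
      (fun j _ => sq_nonneg _) (Finset.mem_univ i)
  set m : Fin A → ℝ := fun i => max (-μ i) 0 with hm
  have hmc : (∑ i, m i * c i) ≤ Real.sqrt (∑ i, m i ^ 2) := by
    calc (∑ i, m i * c i) ≤ Real.sqrt (∑ i, m i ^ 2) * Real.sqrt (∑ i, c i ^ 2) :=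
          Real.sum_mul_le_sqrt_mul_sqrt _ _ _
      _ ≤ Real.sqrt (∑ i, m i ^ 2) * 1 := by
          apply mul_le_mul_of_nonneg_left _ (Real.sqrt_nonneg _)
          calc Real.sqrt (∑ i, c i ^ 2) ≤ Real.sqrt 1 := Real.sqrt_le_sqrt hcsq
            _ = 1 := Real.sqrt_one
      _ = Real.sqrt (∑ i, m i ^ 2) := mul_one _
  have hlow : -(∑ i, m i * c i) ≤ ∑ i, μ i * c i := by
    have h : (∑ i, -(m i * c i)) ≤ ∑ i, μ i * c i := by
      apply Finset.sum_le_sum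
      intro i _
      have h1 : -m i ≤ μ i := neg_le.mpr (le_max_left _ _)
      calc -(m i * c i) = (-m i) * c i := by ring
        _ ≤ μ i * c i := mul_le_mul_of_nonneg_right h1 (hcnonneg i)
    simpa using h
  rw [htr]
  calc -Real.sqrt (∑ i, m i ^ 2) ≤ -(∑ i, m i * c i) := neg_le_neg hmc
    _ ≤ ∑ i, μ i * c i := hlow
end
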